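/- Let ν: ℝ → [0,∞) be a C² probability-density-type function with ν, ν'' ∈ L¹(ℝ, dx), let γ: 𝒟 → ℝ satisfy inf_{y∈𝒟} |γ(y)| ≥ ε > 0, and define ν_y(x) = (1/|γ(y)|)·ν(x/γ(y)). Then there exists c ≥ 0 (independent of y and Δx ∈ (0,1]) such that ∑_{l∈ℤ} ν_y(l·Δx)·Δx ≤ c for all y ∈ 𝒟 and all Δx ∈ (0,1]. In fact one may take c = ∫_ℝ ν(x)dx + (1/(12ε²))·∫_ℝ |ν''(x)|dx. -/

import Mathlib

open MeasureTheory intervalIntegral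

noncomputable def Qk (a t : ℝ) : ℝ := ((t - a)^2 - (t - a) + 1/6)/2

lemma cell_id (f : ℝ → ℝ) (hd : Differentiable ℝ f) (hd1 : Differentiable ℝ (deriv f))
    (hc2 : Continuous (deriv (deriv f))) (a : ℝ) :
    ∫ t in a..(a+1), Qk a t * deriv (deriv f) t
      = (∫ t in a..(a+1), f t) + (deriv f (a+1) - deriv f a)/12 - (f (a+1) + f a)/2 := by
  have hcf : Continuous f := hd.continuous
  have hcf1 : Continuous (deriv f) := hd1.continuous
  have key : ∫ t in a..(a+1), (Qk a t * deriv (deriv f) t - f t)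
      = (Qk a (a+1) * deriv f (a+1) - ((a+1) - a - 1/2) * f (a+1))
        - (Qk a a * deriv f a - (a - a - 1/2) * f a) := by
    apply intervalIntegral.integral_eq_sub_of_hasDerivAt
      (f := fun t => Qk a t * deriv f t - (t - a - 1/2) * f t)
    · intro t _
      have h1 : HasDerivAt (fun t => Qk a t) (t - a - 1/2) t := by
        unfold Qk
        have := (((hasDerivAt_id t).sub_const a).pow 2).sub ((hasDerivAt_id t).sub_const a)
        have h := (this.add_const (1/6 : ℝ)).div_const 2
        refine h.congr_deriv ?_
        simp [id]
        ring
      have h2 : HasDerivAt f (deriv f t) t := (hd t).hasDerivAt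
      have h3 : HasDerivAt (deriv f) (deriv (deriv f) t) t := (hd1 t).hasDerivAt
      have h4 : HasDerivAt (fun t => t - a - 1/2) 1 t := by
        simpa using ((hasDerivAt_id t).sub_const a).sub_const (1/2 : ℝ)
      have := (h1.mul h3).sub (h4.mul h2)
      refine this.congr_deriv ?_
      ring
    · apply Continuous.intervalIntegrable
      apply Continuous.sub _ hcf
      exact (by unfold Qk; continuity : Continuous fun t => Qk a t).mul hc2
  have hQc : Continuous fun t => Qk a t := by unfold Qk; continuity
  have hi1 : IntervalIntegrable (fun t => Qk a t * deriv (deriv f) t) volume a (a+1) :=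
    (hQc.mul hc2).intervalIntegrable _ _
  have hi2 : IntervalIntegrable f volume a (a+1) := hcf.intervalIntegrable _ _
  rw [intervalIntegral.integral_sub hi1 hi2] at key
  have hQ1 : Qk a (a+1) = 1/12 := by unfold Qk; ring
  have hQ0 : Qk a a = 1/12 := by unfold Qk; ring
  rw [hQ1, hQ0] at key
  linarith [key]

lemma Qk_abs_le {a t : ℝ} (h1 : a ≤ t) (h2 : t ≤ a + 1) : |Qk a t| ≤ 1/12 := by
  rw [abs_le]
  constructor <;> [unfold Qk; unfold Qk] <;> nlinarith [sq_nonneg (t - a - 1/2), sq_nonneg (t-a)]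

lemma cell_ineq (f : ℝ → ℝ) (hd : Differentiable ℝ f) (hd1 : Differentiable ℝ (deriv f))
    (hc2 : Continuous (deriv (deriv f))) (a : ℝ) :
    (f a + f (a+1))/2 ≤ (∫ t in a..(a+1), f t) + (deriv f (a+1) - deriv f a)/12
      + (1/12) * ∫ t in a..(a+1), |deriv (deriv f) t| := by
  have hid := cell_id f hd hd1 hc2 a
  have hQc : Continuous fun t => Qk a t := by unfold Qk; continuity
  have hb : |∫ t in a..(a+1), Qk a t * deriv (deriv f) t|
      ≤ (1/12) * ∫ t in a..(a+1), |deriv (deriv f) t| := by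
    have h1 : |∫ t in a..(a+1), Qk a t * deriv (deriv f) t|
        ≤ ∫ t in a..(a+1), |Qk a t * deriv (deriv f) t| := by
      apply intervalIntegral.abs_integral_le_integral_abs (by linarith)
    refine h1.trans ?_
    rw [show (1/12 : ℝ) * ∫ t in a..(a+1), |deriv (deriv f) t|
        = ∫ t in a..(a+1), (1/12) * |deriv (deriv f) t| by
      rw [intervalIntegral.integral_const_mul]]
    apply intervalIntegral.integral_mono_on (by linarith)
    · exact ((hQc.mul hc2).abs).intervalIntegrable _ _
    · exact (continuous_const.mul hc2.abs).intervalIntegrable _ _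
    · intro t ht
      calc |Qk a t * deriv (deriv f) t| = |Qk a t| * |deriv (deriv f) t| := abs_mul _ _
        _ ≤ (1/12) * |deriv (deriv f) t| :=
          mul_le_mul_of_nonneg_right (Qk_abs_le ht.1 ht.2) (abs_nonneg _)
  have := neg_abs_le (∫ t in a..(a+1), Qk a t * deriv (deriv f) t)
  linarith [hid, hb, this]


lemma finite_sum (f : ℝ → ℝ) (hd : Differentiable ℝ f) (hd1 : Differentiable ℝ (deriv f))
    (hc2 : Continuous (deriv (deriv f))) (a : ℝ) (n : ℕ) :
    ∑ k ∈ Finset.range (n+1), f (a + k)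
      ≤ (∫ t in a..(a + n), f t) + (f a + f (a + n))/2 + (deriv f (a + n) - deriv f a)/12
        + (1/12) * ∫ t in a..(a + n), |deriv (deriv f) t| := by
  induction n with
  | zero => simp
  | succ n ih =>
    rw [Finset.sum_range_succ]
    have hcell := cell_ineq f hd hd1 hc2 (a + n)
    have hadd1 : (∫ t in a..(a+n), f t) + (∫ t in (a+n)..(a+n+1), f t)
        = ∫ t in a..(a + (n+1) : ℝ), f t := by
      rw [intervalIntegral.integral_add_adjacent_intervals
        (hd.continuous.intervalIntegrable _ _) (hd.continuous.intervalIntegrable _ _)]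
      norm_num [add_assoc]
    have hadd2 : (∫ t in a..(a+n), |deriv (deriv f) t|) + (∫ t in (a+n)..(a+n+1), |deriv (deriv f) t|)
        = ∫ t in a..(a + (n+1) : ℝ), |deriv (deriv f) t| := by
      rw [intervalIntegral.integral_add_adjacent_intervals
        (hc2.abs.intervalIntegrable _ _) (hc2.abs.intervalIntegrable _ _)]
      norm_num [add_assoc]
    rw [show a + ((n:ℝ)+1) = a + n + 1 by ring] at hadd1 hadd2
    push_cast
    rw [show a + ((n:ℝ)+1) = a + n + 1 by ring]
    linarith [ih, hcell, hadd1, hadd2]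

open Filter Topology

lemma deriv_fund (f : ℝ → ℝ) (hd1 : Differentiable ℝ (deriv f))
    (hc2 : Continuous (deriv (deriv f))) (x y : ℝ) :
    deriv f y = deriv f x + ∫ t in x..y, deriv (deriv f) t := by
  have := intervalIntegral.integral_deriv_eq_sub (f := deriv f) (a := x) (b := y)
    (fun t _ => hd1 t) (hc2.intervalIntegrable _ _)
  linarith

lemma deriv_tendsto_atTop (f : ℝ → ℝ) (hd1 : Differentiable ℝ (deriv f))
    (hc2 : Continuous (deriv (deriv f))) (hf2i : Integrable (deriv (deriv f))) :
    Tendsto (deriv f) atTop (𝓝 (deriv f 0 + ∫ x in Set.Ioi 0, deriv (deriv f) x)) := by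
  have ht := intervalIntegral_tendsto_integral_Ioi 0 hf2i.integrableOn tendsto_id
  exact (tendsto_const_nhds.add ht).congr (fun x => (deriv_fund f hd1 hc2 0 x).symm)

lemma deriv_tendsto_atBot (f : ℝ → ℝ) (hd1 : Differentiable ℝ (deriv f))
    (hc2 : Continuous (deriv (deriv f))) (hf2i : Integrable (deriv (deriv f))) :
    Tendsto (deriv f) atBot (𝓝 (deriv f 0 - ∫ x in Set.Iic 0, deriv (deriv f) x)) := by
  have ht := intervalIntegral_tendsto_integral_Iic 0 hf2i.integrableOn tendsto_id
  simp only [id_eq] at ht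
  refine (tendsto_const_nhds.sub ht).congr (fun x => ?_)
  have h := deriv_fund f hd1 hc2 0 x
  rw [intervalIntegral.integral_symm] at h
  linarith

lemma diff_eq_integral (f : ℝ → ℝ) (hd : Differentiable ℝ f)
    (hd1 : Differentiable ℝ (deriv f)) (L : ℝ) (l : ℝ) :
    f (l + 1) - f l - L = ∫ t in l..(l+1), (deriv f t - L) := by
  have hfund : ∫ t in l..(l+1), deriv f t = f (l+1) - f l :=
    intervalIntegral.integral_deriv_eq_sub (fun t _ => hd t)
      (hd1.continuous.intervalIntegrable _ _)
  rw [intervalIntegral.integral_sub (hd1.continuous.intervalIntegrable _ _)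
    intervalIntegrable_const, hfund, intervalIntegral.integral_const]
  simp

lemma lim_zero_top (f : ℝ → ℝ) (hd : Differentiable ℝ f) (hd1 : Differentiable ℝ (deriv f))
    {L : ℝ} (hL : Tendsto (deriv f) atTop (𝓝 L))
    (hfl : Tendsto (fun l : ℤ => f ↑l) atTop (𝓝 0)) : L = 0 := by
  have h1 : Tendsto (fun l : ℤ => f (↑l + 1) - f ↑l) atTop (𝓝 0) := by
    have hs : Tendsto (fun l : ℤ => l + 1) atTop atTop :=
      tendsto_atTop_add_const_right _ 1 tendsto_id
    have h := (hfl.comp hs).sub hfl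
    simp only [Function.comp_def] at h
    push_cast at h
    simpa using h
  have h2 : Tendsto (fun l : ℤ => f (↑l + 1) - f ↑l) atTop (𝓝 L) := by
    rw [Metric.tendsto_nhds] at hL ⊢
    intro ε hε
    obtain ⟨M, hM⟩ := Filter.eventually_atTop.mp (hL (ε/2) (by positivity))
    rw [Filter.eventually_atTop]
    refine ⟨⌈M⌉, fun l hl => ?_⟩
    rw [Real.dist_eq, diff_eq_integral f hd hd1 L]
    have hb := intervalIntegral.norm_integral_le_of_norm_le_const (C := ε/2)
      (f := fun t => deriv f t - L) (a := (l:ℝ)) (b := (l:ℝ)+1)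
      (fun t ht => by
        rw [Set.uIoc_of_le (by linarith)] at ht
        have htM : M ≤ t := le_trans (le_trans (Int.le_ceil M) (by exact_mod_cast hl)) ht.1.le
        have := hM t htM
        rw [Real.dist_eq] at this
        exact le_of_lt this)
    simp only [add_sub_cancel_left, abs_one, mul_one, Real.norm_eq_abs] at hb
    calc |∫ t in (l:ℝ)..(l:ℝ)+1, (deriv f t - L)| ≤ ε/2 := hb
      _ < ε := by linarith
  exact tendsto_nhds_unique h2 h1

lemma lim_zero_bot (f : ℝ → ℝ) (hd : Differentiable ℝ f) (hd1 : Differentiable ℝ (deriv f))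
    {L : ℝ} (hL : Tendsto (deriv f) atBot (𝓝 L))
    (hfl : Tendsto (fun l : ℤ => f ↑l) atBot (𝓝 0)) : L = 0 := by
  have h1 : Tendsto (fun l : ℤ => f (↑l + 1) - f ↑l) atBot (𝓝 0) := by
    have hs : Tendsto (fun l : ℤ => l + 1) atBot atBot :=
      tendsto_atBot_add_const_right _ 1 tendsto_id
    have h := (hfl.comp hs).sub hfl
    simp only [Function.comp_def] at h
    push_cast at h
    simpa using h
  have h2 : Tendsto (fun l : ℤ => f (↑l + 1) - f ↑l) atBot (𝓝 L) := by
    rw [Metric.tendsto_nhds] at hL ⊢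
    intro ε hε
    obtain ⟨M, hM⟩ := Filter.eventually_atBot.mp (hL (ε/2) (by positivity))
    rw [Filter.eventually_atBot]
    refine ⟨⌊M⌋ - 1, fun l hl => ?_⟩
    rw [Real.dist_eq, diff_eq_integral f hd hd1 L]
    have hb := intervalIntegral.norm_integral_le_of_norm_le_const (C := ε/2)
      (f := fun t => deriv f t - L) (a := (l:ℝ)) (b := (l:ℝ)+1)
      (fun t ht => by
        rw [Set.uIoc_of_le (by linarith)] at ht
        have hlM : (l:ℝ) + 1 ≤ M := by
          have : (l:ℝ) ≤ (⌊M⌋:ℝ) - 1 := by exact_mod_cast hl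
          have := Int.floor_le M
          linarith
        have htM : t ≤ M := le_trans ht.2 hlM
        have := hM t htM
        rw [Real.dist_eq] at this
        exact le_of_lt this)
    simp only [add_sub_cancel_left, abs_one, mul_one, Real.norm_eq_abs] at hb
    calc |∫ t in (l:ℝ)..(l:ℝ)+1, (deriv f t - L)| ≤ ε/2 := hb
      _ < ε := by linarith
  exact tendsto_nhds_unique h2 h1

lemma interval_le_integral (g : ℝ → ℝ) (hg : Integrable g) (h0 : ∀ x, 0 ≤ g x)
    {a b : ℝ} (hab : a ≤ b) : (∫ t in a..b, g t) ≤ ∫ x, g x := by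
  rw [intervalIntegral.integral_of_le hab]
  exact setIntegral_le_integral hg (Filter.Eventually.of_forall h0)

lemma sum_Icc_reindex (f : ℝ → ℝ) (N : ℕ) :
    ∑ l ∈ Finset.Icc (-(N:ℤ)) N, f ↑l
      = ∑ k ∈ Finset.range (2*N+1), f ((-(N:ℤ) : ℝ) + k) := by
  have h : Finset.Icc (-(N:ℤ)) N
      = (Finset.range (2*N+1)).map ⟨fun k : ℕ => -(N:ℤ) + (k:ℤ),
          fun a b h => by simp only [add_right_inj, Nat.cast_inj] at h; exact h⟩ := by
    ext l
    simp only [Finset.mem_Icc, Finset.mem_map, Finset.mem_range, Function.Embedding.coeFn_mk]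
    change -(N:ℤ) ≤ l ∧ l ≤ N ↔ ∃ a < 2 * N + 1, -(N:ℤ) + (a:ℤ) = l
    constructor
    · intro hm; exact ⟨(l + N).toNat, by omega, by omega⟩
    · rintro ⟨k, hk, rfl⟩; omega
  rw [h, Finset.sum_map]
  apply Finset.sum_congr rfl
  intro k _
  show f ((-(N:ℤ) + (k:ℤ) : ℤ) : ℝ) = _
  norm_num

lemma riemann_sum_le (f : ℝ → ℝ) (hf0 : ∀ x, 0 ≤ f x) (hf : ContDiff ℝ 2 f)
    (hfi : Integrable f) (hf2i : Integrable (deriv (deriv f))) :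
    ∑' l : ℤ, f ↑l ≤ (∫ x, f x) + (1/12) * ∫ x, |deriv (deriv f) x| := by
  have hd : Differentiable ℝ f := hf.differentiable (by norm_num)
  have hf1 : ContDiff ℝ 1 (deriv f) :=
    (contDiff_succ_iff_deriv.mp (show ContDiff ℝ (1+1) f by exact_mod_cast hf)).2.2
  have hd1 : Differentiable ℝ (deriv f) := hf1.differentiable one_ne_zero
  have hc2 : Continuous (deriv (deriv f)) := (contDiff_one_iff_deriv.mp hf1).2
  have hc_nonneg : 0 ≤ (∫ x, f x) + (1/12) * ∫ x, |deriv (deriv f) x| := by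
    have h1 : 0 ≤ ∫ x, f x := integral_nonneg hf0
    have h2 : 0 ≤ ∫ x, |deriv (deriv f) x| := integral_nonneg (fun x => abs_nonneg _)
    linarith
  by_cases hs : Summable (fun l : ℤ => f ↑l)
  swap
  · rw [tsum_eq_zero_of_not_summable hs]; exact hc_nonneg
  apply Summable.tsum_le_of_sum_le hs
  intro s
  set c := (∫ x, f x) + (1/12) * ∫ x, |deriv (deriv f) x| with hc
  -- limits of f at integer points
  have hfl_top : Tendsto (fun l : ℤ => f ↑l) atTop (𝓝 0) :=
    hs.tendsto_cofinite_zero.mono_left (by rw [Int.cofinite_eq]; exact le_sup_right)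
  have hfl_bot : Tendsto (fun l : ℤ => f ↑l) atBot (𝓝 0) :=
    hs.tendsto_cofinite_zero.mono_left (by rw [Int.cofinite_eq]; exact le_sup_left)
  have hLT := deriv_tendsto_atTop f hd1 hc2 hf2i
  have hLB := deriv_tendsto_atBot f hd1 hc2 hf2i
  have hLT0 := lim_zero_top f hd hd1 hLT hfl_top
  have hLB0 := lim_zero_bot f hd hd1 hLB hfl_bot
  rw [hLT0] at hLT
  rw [hLB0] at hLB
  -- boundary term tends to zero
  set B : ℕ → ℝ := fun N =>
    (f (-(N:ℝ)) + f (N:ℝ))/2 + (deriv f (N:ℝ) - deriv f (-(N:ℝ)))/12 with hB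
  have hnat : Tendsto (fun N : ℕ => (N:ℝ)) atTop atTop := tendsto_natCast_atTop_atTop
  have hnegnat : Tendsto (fun N : ℕ => -(N:ℝ)) atTop atBot :=
    tendsto_neg_atBot_iff.mpr hnat
  have hnatZ : Tendsto (fun N : ℕ => (N:ℤ)) atTop atTop := tendsto_natCast_atTop_atTop
  have hnegnatZ : Tendsto (fun N : ℕ => -(N:ℤ)) atTop atBot :=
    tendsto_neg_atBot_iff.mpr hnatZ
  have h1 : Tendsto (fun N : ℕ => f (-(N:ℝ))) atTop (𝓝 0) := by
    have := hfl_bot.comp hnegnatZ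
    simpa [Function.comp_def] using this
  have h2 : Tendsto (fun N : ℕ => f (N:ℝ)) atTop (𝓝 0) := by
    have := hfl_top.comp hnatZ
    simpa [Function.comp_def] using this
  have h3 : Tendsto (fun N : ℕ => deriv f (N:ℝ)) atTop (𝓝 0) := hLT.comp hnat
  have h4 : Tendsto (fun N : ℕ => deriv f (-(N:ℝ))) atTop (𝓝 0) := hLB.comp hnegnat
  have hBtend : Tendsto B atTop (𝓝 0) := by
    have := ((h1.add h2).div_const 2).add ((h3.sub h4).div_const 12)
    simpa using this
  -- the finite bound
  have hmain : ∀ N : ℕ, (∀ l ∈ s, l ∈ Finset.Icc (-(N:ℤ)) N) → ∑ l ∈ s, f ↑l ≤ c + B N := by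
    intro N hsub
    have hstep1 : ∑ l ∈ s, f ↑l ≤ ∑ l ∈ Finset.Icc (-(N:ℤ)) N, f ↑l :=
      Finset.sum_le_sum_of_subset_of_nonneg hsub (fun l _ _ => hf0 _)
    rw [sum_Icc_reindex f N] at hstep1
    have hfin := finite_sum f hd hd1 hc2 (-(N:ℤ) : ℝ) (2*N)
    rw [show ((-(N:ℤ) : ℝ)) + ((2*N : ℕ) : ℝ) = (N:ℝ) by push_cast; ring] at hfin
    have hIf : (∫ t in (-(N:ℤ) : ℝ)..(N:ℝ), f t) ≤ ∫ x, f x :=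
      interval_le_integral f hfi hf0 (by push_cast; linarith [Nat.cast_nonneg (α := ℝ) N])
    have hIa : (∫ t in (-(N:ℤ) : ℝ)..(N:ℝ), |deriv (deriv f) t|) ≤ ∫ x, |deriv (deriv f) x| :=
      interval_le_integral _ hf2i.abs (fun x => abs_nonneg _)
        (by push_cast; linarith [Nat.cast_nonneg (α := ℝ) N])
    have hcast : ((-(N:ℤ)) : ℝ) = -(N:ℝ) := by push_cast; ring
    rw [hcast] at hstep1 hfin hIf hIa
    have hBN : B N = (f (-(N:ℝ)) + f (N:ℝ))/2 + (deriv f (N:ℝ) - deriv f (-(N:ℝ)))/12 := rfl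
    rw [hc, hBN] at *
    linarith [hstep1, hfin, hIf, hIa]
  -- pass to the limit
  have hev : ∀ᶠ N : ℕ in atTop, ∑ l ∈ s, f ↑l ≤ c + B N := by
    rw [Filter.eventually_atTop]
    refine ⟨s.sup (fun l => l.natAbs), fun N hN => hmain N ?_⟩
    intro l hl
    have : l.natAbs ≤ N := le_trans (Finset.le_sup hl) hN
    simp only [Finset.mem_Icc]
    omega
  have hlim : Tendsto (fun N : ℕ => c + B N) atTop (𝓝 c) := by
    simpa using tendsto_const_nhds.add hBtend
  exact ge_of_tendsto hlim hev

lemma deriv_scale (ν : ℝ → ℝ) (hdν : Differentiable ℝ ν) (k a : ℝ) :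
    deriv (fun t => k * ν (a * t)) = fun t => k * a * deriv ν (a * t) := by
  funext t
  have h1 : HasDerivAt (fun t : ℝ => a * t) a t := by
    simpa using (hasDerivAt_id t).const_mul a
  have h2 : HasDerivAt ν (deriv ν (a*t)) (a*t) := (hdν _).hasDerivAt
  have h := (h2.comp t h1).const_mul k
  have : HasDerivAt (fun t => k * ν (a * t)) (k * a * deriv ν (a * t)) t := by
    refine h.congr_deriv ?_; ring
  exact this.deriv

theorem scaled_density_discrete_mass_bound_aux
    {𝒟 : Type*} [Nonempty 𝒟]
    (ν : ℝ → ℝ) (hν_nonneg : ∀ x, 0 ≤ ν x) (hν : ContDiff ℝ 2 ν)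
    (hν0 : Integrable ν) (hν2 : Integrable (deriv (deriv ν)))
    (γ : 𝒟 → ℝ) (ε : ℝ) (hε : 0 < ε) (hγ : ∀ y, ε ≤ |γ y|) :
    ∃ c : ℝ, 0 ≤ c ∧
      c = (∫ x : ℝ, ν x) + 1 / (12 * ε ^ 2) * ∫ x : ℝ, |deriv (deriv ν) x| ∧
      ∀ y : 𝒟, ∀ Δx : ℝ, 0 < Δx → Δx ≤ 1 →
        (∑' l : ℤ, (1 / |γ y| * ν ((l * Δx) / γ y)) * Δx) ≤ c := by
  have hI0 : 0 ≤ ∫ x : ℝ, ν x := integral_nonneg hν_nonneg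
  have hI2 : 0 ≤ ∫ x : ℝ, |deriv (deriv ν) x| := integral_nonneg (fun x => abs_nonneg _)
  refine ⟨_, by positivity, rfl, ?_⟩
  intro y Δx hΔ hΔ1
  have hγy : 0 < |γ y| := lt_of_lt_of_le hε (hγ y)
  have hγ0 : γ y ≠ 0 := by intro h; rw [h] at hγy; simp at hγy
  set k : ℝ := Δx / |γ y| with hk
  set a : ℝ := Δx / γ y with ha
  have ha0 : a ≠ 0 := div_ne_zero hΔ.ne' hγ0
  have hk0 : 0 < k := div_pos hΔ hγy
  set f : ℝ → ℝ := fun t => k * ν (a * t) with hf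
  have hdν : Differentiable ℝ ν := hν.differentiable (by norm_num)
  have hν1 : ContDiff ℝ 1 (deriv ν) :=
    (contDiff_succ_iff_deriv.mp (show ContDiff ℝ (1+1) ν by exact_mod_cast hν)).2.2
  have hdν1 : Differentiable ℝ (deriv ν) := hν1.differentiable one_ne_zero
  -- rewrite the sum
  have hsum : (∑' l : ℤ, (1 / |γ y| * ν ((l * Δx) / γ y)) * Δx) = ∑' l : ℤ, f ↑l := by
    apply tsum_congr
    intro l
    rw [hf]
    simp only []
    rw [show a * (l:ℝ) = ((l:ℝ) * Δx) / γ y by rw [ha]; ring]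
    rw [hk]; ring
  rw [hsum]
  -- derivatives of f
  have hD1 : deriv f = fun t => k * a * deriv ν (a * t) := deriv_scale ν hdν k a
  have hD2 : deriv (deriv f) = fun t => (k * a) * a * deriv (deriv ν) (a * t) := by
    rw [hD1]; exact deriv_scale (deriv ν) hdν1 (k*a) a
  -- contdiff
  have hcf : ContDiff ℝ 2 f :=
    contDiff_const.mul (hν.comp (contDiff_const.mul contDiff_id))
  -- integrability
  have hicomp : Integrable (fun t => ν (a * t)) := hν0.comp_mul_left' ha0
  have hfi : Integrable f := hicomp.const_mul k
  have hf2i : Integrable (deriv (deriv f)) := by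
    rw [hD2]
    exact (hν2.comp_mul_left' ha0).const_mul _
  -- apply the main estimate
  have hmain := riemann_sum_le f (fun t => mul_nonneg hk0.le (hν_nonneg _)) hcf hfi hf2i
  -- compute / bound the two integrals
  have hint1 : (∫ x, f x) = ∫ x, ν x := by
    rw [hf]
    rw [MeasureTheory.integral_const_mul]
    rw [MeasureTheory.Measure.integral_comp_mul_left ν a]
    rw [smul_eq_mul, ← mul_assoc]
    rw [show k * |a⁻¹| = 1 by
      rw [hk, ha, abs_inv, abs_div, abs_of_pos hΔ]
      field_simp]
    ring
  have hint2 : (∫ x, |deriv (deriv f) x|) = (Δx^2 / (γ y)^2) * ∫ x, |deriv (deriv ν) x| := by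
    rw [hD2]
    have : (fun x => |(k * a) * a * deriv (deriv ν) (a * x)|)
        = fun x => |k * a * a| * |deriv (deriv ν) (a * x)| := by
      funext x; rw [abs_mul]
    rw [this]
    rw [MeasureTheory.integral_const_mul]
    rw [MeasureTheory.Measure.integral_comp_mul_left (fun x => |deriv (deriv ν) x|) a]
    rw [smul_eq_mul, ← mul_assoc]
    congr 1
    rw [abs_mul, abs_mul, abs_inv, abs_of_pos hk0, mul_assoc,
      mul_inv_cancel₀ (abs_ne_zero.mpr ha0), mul_one]
    rw [hk, ha, abs_div, abs_of_pos hΔ, div_mul_div_comm, ← sq, ← sq, sq_abs]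
  rw [hint1, hint2] at hmain
  refine hmain.trans ?_
  have h1 : ε^2 ≤ (γ y)^2 := by nlinarith [hγ y, hε, sq_abs (γ y)]
  have hfrac : Δx^2 / (γ y)^2 ≤ 1 / ε^2 :=
    div_le_div₀ zero_le_one (by nlinarith) (by positivity) h1
  have key : 1/12 * ((Δx^2/(γ y)^2) * ∫ x, |deriv (deriv ν) x|)
      ≤ 1/(12*ε^2) * ∫ x, |deriv (deriv ν) x| := by
    rw [show (1:ℝ)/(12*ε^2) = 1/12 * (1/ε^2) by ring]
    rw [mul_assoc]
    have := mul_le_mul_of_nonneg_right hfrac hI2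
    nlinarith [this]
  linarith [key]

/-- Uniform bound on the discrete total mass of the scaled densities
ν_y(x) = ν(x/γ(y))/|γ(y)|: there is a constant c, namely
c = ∫ν + (1/(12ε²))∫|ν''|, such that ∑_l ν_y(lΔx)Δx ≤ c for all y and all
Δx ∈ (0,1]. -/
theorem scaled_density_discrete_mass_bound
    {𝒟 : Type*} [Nonempty 𝒟]
    (ν : ℝ → ℝ) (hν_nonneg : ∀ x, 0 ≤ ν x) (hν : ContDiff ℝ 2 ν)
    (hν0 : Integrable ν) (hν2 : Integrable (deriv (deriv ν)))
    (γ : 𝒟 → ℝ) (ε : ℝ) (hε : 0 < ε) (hγ : ∀ y, ε ≤ |γ y|) :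
    ∃ c : ℝ, 0 ≤ c ∧
      c = (∫ x : ℝ, ν x) + 1 / (12 * ε ^ 2) * ∫ x : ℝ, |deriv (deriv ν) x| ∧
      ∀ y : 𝒟, ∀ Δx : ℝ, 0 < Δx → Δx ≤ 1 →
        (∑' l : ℤ, (1 / |γ y| * ν ((l * Δx) / γ y)) * Δx) ≤ c := by
  exact scaled_density_discrete_mass_bound_aux ν hν_nonneg hν hν0 hν2 γ ε hε hγ
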